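/- Let θ ∈ (0,1). For every x ∈ (0,1)^N, writing U = 1/(Σ_{i=1}^N x_i), f_i(x) = β b_i(x)(1 − x_i) − δ x_i, and g_i(x) = σ_i(x_i) b_i(x)(1 − x_i), one has: θ (1+U)^{θ−1} ( −U² Σ_{i=1}^N f_i(x) + U³ Σ_{i=1}^N g_i(x)² ) + (1/2) θ (θ−1) (1+U)^{θ−2} U⁴ Σ_{i=1}^N g_i(x)² ≤ θ (1+U)^{θ−2} ( −(β d_min − δ − (M²/32) λ1² (1+θ))·U² − (β d_min − β λ1 − δ − (M²/16) λ1²)·U + β λ1 ). -/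

import Mathlib

open Matrix RealInnerProductSpace

lemma spectral_bounds {N : ℕ} (A : Matrix (Fin N) (Fin N) ℝ) (hsymm : A.IsSymm)
    (hnn : ∀ i j, 0 ≤ A i j) (lam1 : ℝ)
    (hmax : ∀ (μ : ℝ) (v : Fin N → ℝ), v ≠ 0 → A.mulVec v = μ • v → μ ≤ lam1) :
    (∀ y : Fin N → ℝ, y ⬝ᵥ A.mulVec y ≤ lam1 * (y ⬝ᵥ y)) ∧
    (∀ (μ : ℝ) (v : Fin N → ℝ), v ≠ 0 → A.mulVec v = μ • v → |μ| ≤ lam1) ∧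
    (∀ y : Fin N → ℝ, A.mulVec y ⬝ᵥ A.mulVec y ≤ lam1 ^ 2 * (y ⬝ᵥ y)) := by
  classical
  have hH : A.IsHermitian := by
    rw [Matrix.IsHermitian]
    ext i j
    simp [Matrix.conjTranspose_apply, hsymm.apply]
  set u : Fin N → (Fin N → ℝ) := fun i => ⇑(hH.eigenvectorBasis i) with hu
  set μ : Fin N → ℝ := hH.eigenvalues with hμ
  have hAu : ∀ i, A.mulVec (u i) = μ i • (u i) := fun i => hH.mulVec_eigenvectorBasis i
  have hune : ∀ i, u i ≠ 0 := by
    intro i h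
    exact hH.eigenvectorBasis.orthonormal.ne_zero i (by ext j; exact congrFun h j)
  have hinner : ∀ a b : EuclideanSpace ℝ (Fin N), ⟪a, b⟫ = (a : Fin N → ℝ) ⬝ᵥ (b : Fin N → ℝ) := by
    intro a b; simp [PiLp.inner_apply, dotProduct, mul_comm]
  have hP : ∀ a b : Fin N → ℝ, ∑ i, (a ⬝ᵥ u i) * (u i ⬝ᵥ b) = a ⬝ᵥ b := by
    intro a b
    have := OrthonormalBasis.sum_inner_mul_inner hH.eigenvectorBasis
      ((WithLp.equiv 2 (Fin N → ℝ)).symm a) ((WithLp.equiv 2 (Fin N → ℝ)).symm b)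
    simpa [hinner] using this
  have hsd : ∀ a b : Fin N → ℝ, a ⬝ᵥ A.mulVec b = A.mulVec a ⬝ᵥ b := by
    intro a b
    rw [Matrix.dotProduct_mulVec, ← Matrix.mulVec_transpose, hsymm.eq]
  have hd1 : ∀ (i : Fin N) (y : Fin N → ℝ), u i ⬝ᵥ A.mulVec y = μ i * (u i ⬝ᵥ y) := by
    intro i y
    rw [hsd, hAu i, smul_dotProduct]
    rfl
  have e2 : ∀ y : Fin N → ℝ, y ⬝ᵥ y = ∑ i, (u i ⬝ᵥ y) ^ 2 := by
    intro y
    rw [← hP y y]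
    exact Finset.sum_congr rfl fun i _ => by rw [dotProduct_comm y (u i)]; ring
  have ray : ∀ y : Fin N → ℝ, y ⬝ᵥ A.mulVec y ≤ lam1 * (y ⬝ᵥ y) := by
    intro y
    have e1 : y ⬝ᵥ A.mulVec y = ∑ i, μ i * (u i ⬝ᵥ y) ^ 2 := by
      rw [← hP y (A.mulVec y)]
      refine Finset.sum_congr rfl fun i _ => ?_
      rw [hd1, dotProduct_comm y (u i)]; ring
    rw [e1, e2, Finset.mul_sum]
    refine Finset.sum_le_sum fun i _ => ?_
    have := hmax (μ i) (u i) (hune i) (hAu i)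
    nlinarith [sq_nonneg (u i ⬝ᵥ y)]
  have habs : ∀ (ν : ℝ) (v : Fin N → ℝ), v ≠ 0 → A.mulVec v = ν • v → |ν| ≤ lam1 := by
    intro ν v hv hAv
    have hvv : 0 < v ⬝ᵥ v := by
      obtain ⟨j, hj⟩ := Function.ne_iff.mp hv
      exact Finset.sum_pos' (fun i _ => mul_self_nonneg _)
        ⟨j, Finset.mem_univ j, mul_self_pos.mpr hj⟩
    set w : Fin N → ℝ := fun j => |v j| with hw
    have hww : w ⬝ᵥ w = v ⬝ᵥ v := by
      simp [dotProduct, hw, abs_mul_abs_self]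
    have e3 : v ⬝ᵥ A.mulVec v = ν * (v ⬝ᵥ v) := by
      rw [hAv]
      simp [dotProduct_smul, smul_eq_mul]
    have h5 : ∀ j, |v j * (A.mulVec v) j| ≤ w j * (A.mulVec w) j := by
      intro j
      have hAvj : (A.mulVec v) j = ∑ k, A j k * v k := rfl
      have hAwj : (A.mulVec w) j = ∑ k, A j k * |v k| := rfl
      rw [abs_mul, hAvj, hAwj, hw]
      refine mul_le_mul_of_nonneg_left ?_ (abs_nonneg _)
      calc |∑ k, A j k * v k| ≤ ∑ k, |A j k * v k| := Finset.abs_sum_le_sum_abs _ _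
        _ = ∑ k, A j k * |v k| := Finset.sum_congr rfl fun k _ => by
            rw [abs_mul, abs_of_nonneg (hnn j k)]
    have e4 : |ν| * (v ⬝ᵥ v) ≤ w ⬝ᵥ A.mulVec w := by
      calc |ν| * (v ⬝ᵥ v) = |ν * (v ⬝ᵥ v)| := by rw [abs_mul, abs_of_nonneg hvv.le]
        _ = |v ⬝ᵥ A.mulVec v| := by rw [e3]
        _ ≤ ∑ j, |v j * (A.mulVec v) j| := Finset.abs_sum_le_sum_abs _ _
        _ ≤ ∑ j, w j * (A.mulVec w) j := Finset.sum_le_sum fun j _ => h5 j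
        _ = w ⬝ᵥ A.mulVec w := rfl
    have h6 := (e4.trans (ray w)).trans_eq (by rw [hww])
    exact le_of_mul_le_mul_right (by linarith) hvv
  refine ⟨ray, habs, ?_⟩
  intro y
  have e5 : A.mulVec y ⬝ᵥ A.mulVec y = ∑ i, (μ i * (u i ⬝ᵥ y)) ^ 2 := by
    rw [← hP (A.mulVec y) (A.mulVec y)]
    refine Finset.sum_congr rfl fun i _ => ?_
    rw [dotProduct_comm (A.mulVec y) (u i), hd1]; ring
  rw [e5, e2, Finset.mul_sum]
  refine Finset.sum_le_sum fun i _ => ?_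
  have h7 := habs (μ i) (u i) (hune i) (hAu i)
  have h8 : μ i ^ 2 ≤ lam1 ^ 2 := sq_le_sq' (neg_le_of_abs_le h7) (le_of_abs_le h7)
  nlinarith [sq_nonneg (u i ⬝ᵥ y), sq_nonneg (μ i)]


set_option maxHeartbeats 1000000 in
/-- Inequality (L1u) in the proof of Lemma 4.1 (with the constant term `βλ₁` made explicit):
the generator applied to `(1 + U(x))^θ` in a fixed environmental state is bounded by
`θ(1+U)^{θ-2} ( -(β d_min - δ - (M²/32)λ₁²(1+θ)) U² - (β d_min - βλ₁ - δ - (M²/16)λ₁²) U + βλ₁ )`. -/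
theorem generator_onePlusU_estimate
    (N : ℕ) (hN : 1 ≤ N)
    (A : Matrix (Fin N) (Fin N) ℝ)
    (hA_symm : A.IsSymm)
    (hA_01 : ∀ i j, A i j = 0 ∨ A i j = 1)
    (hA_diag : ∀ i, A i i = 0)
    (lam1 : ℝ)
    (hlam1_eig : ∃ v : Fin N → ℝ, v ≠ 0 ∧ A.mulVec v = lam1 • v)
    (hlam1_max : ∀ (μ : ℝ) (v : Fin N → ℝ), v ≠ 0 → A.mulVec v = μ • v → μ ≤ lam1)
    (dmin : ℝ)
    (hdmin_le : ∀ i, dmin ≤ ∑ j, A i j)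
    (hdmin_mem : ∃ i, dmin = ∑ j, A i j)
    (β δ : ℝ) (hβ : 0 ≤ β) (hδ : 0 ≤ δ)
    (M : ℝ) (hM : 0 ≤ M)
    (σ : Fin N → ℝ → ℝ)
    (hσ : ∀ i, ∀ v ∈ Set.Ioo (0 : ℝ) 1, |σ i v| ≤ M * v)
    (θ : ℝ) (hθ : θ ∈ Set.Ioo (0 : ℝ) 1)
    (x : Fin N → ℝ) (hx : ∀ i, x i ∈ Set.Ioo (0 : ℝ) 1)
    (U : ℝ) (hU : U = 1 / ∑ i, x i)
    (f g : Fin N → ℝ)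
    (hf : ∀ i, f i = β * (∑ j, A i j * x j) * (1 - x i) - δ * x i)
    (hg : ∀ i, g i = σ i (x i) * (∑ j, A i j * x j) * (1 - x i)) :
    θ * (1 + U) ^ (θ - 1) * (-(U ^ 2) * (∑ i, f i) + U ^ 3 * ∑ i, (g i) ^ 2)
        + (1 / 2) * θ * (θ - 1) * (1 + U) ^ (θ - 2) * U ^ 4 * ∑ i, (g i) ^ 2
      ≤ θ * (1 + U) ^ (θ - 2) *
          (-(β * dmin - δ - M ^ 2 / 32 * lam1 ^ 2 * (1 + θ)) * U ^ 2
            - (β * dmin - β * lam1 - δ - M ^ 2 / 16 * lam1 ^ 2) * U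
            + β * lam1) := by
  obtain ⟨hθ0, hθ1⟩ := hθ
  have hnn : ∀ i j, 0 ≤ A i j := fun i j => by rcases hA_01 i j with h | h <;> simp [h]
  obtain ⟨ray, habs, ray2⟩ := spectral_bounds A hA_symm hnn lam1 hlam1_max
  obtain ⟨v, hv0, hveig⟩ := hlam1_eig
  have hlam0 : 0 ≤ lam1 := le_trans (abs_nonneg lam1) (habs lam1 v hv0 hveig)
  set S := ∑ i, x i with hSdef
  have hS0 : 0 < S := Finset.sum_pos (fun i _ => (hx i).1) ⟨⟨0, hN⟩, Finset.mem_univ _⟩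
  have hU0 : 0 < U := by rw [hU]; positivity
  have hS1 : U * S = 1 := by rw [hU]; field_simp
  set b : Fin N → ℝ := A.mulVec x with hbdef
  have hb : ∀ i, b i = ∑ j, A i j * x j := fun i => rfl
  set B := ∑ i, b i with hBdef
  set X2 := ∑ i, (x i) ^ 2 with hX2def
  set Q := ∑ i, x i * b i with hQdef
  set G := ∑ i, (g i) ^ 2 with hGdef
  set F := ∑ i, f i with hFdef
  -- sum of f
  have hFsum : F = β * B - β * Q - δ * S := by
    rw [hFdef, hBdef, hQdef, hSdef]
    rw [Finset.sum_congr rfl fun i _ =>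
      (show f i = β * b i - β * (x i * b i) - δ * x i from by rw [hf, hb]; ring)]
    rw [Finset.sum_sub_distrib, Finset.sum_sub_distrib, ← Finset.mul_sum, ← Finset.mul_sum,
      ← Finset.mul_sum]
  -- degree bound
  have hB : dmin * S ≤ B := by
    have swap : B = ∑ j, (∑ i, A i j) * x j := by
      rw [hBdef, Finset.sum_congr rfl fun i _ => hb i, Finset.sum_comm]
      exact Finset.sum_congr rfl fun j _ => by rw [Finset.sum_mul]
    rw [swap, hSdef, Finset.mul_sum]
    refine Finset.sum_le_sum fun j _ => ?_
    have hcol : dmin ≤ ∑ i, A i j :=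
      (hdmin_le j).trans_eq (Finset.sum_congr rfl fun k _ => (hA_symm.apply k j).symm ▸ rfl)
    exact mul_le_mul_of_nonneg_right hcol (hx j).1.le
  -- Rayleigh bounds
  have hxx : x ⬝ᵥ x = X2 := by
    rw [hX2def]; exact Finset.sum_congr rfl fun i _ => by rw [sq]
  have hQ : Q ≤ lam1 * X2 := by
    have h1 := ray x
    rw [hxx] at h1
    have e : x ⬝ᵥ b = Q := rfl
    rw [e] at h1
    exact h1
  have hBB : ∑ i, (b i) ^ 2 ≤ lam1 ^ 2 * X2 := by
    have h1 := ray2 x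
    rw [hxx] at h1
    have e : b ⬝ᵥ b = ∑ i, (b i) ^ 2 := Finset.sum_congr rfl fun i _ => (sq (b i)).symm
    rw [e] at h1
    exact h1
  -- g bound
  have hgi : ∀ i, (g i) ^ 2 ≤ M ^ 2 / 16 * (b i) ^ 2 := by
    intro i
    obtain ⟨hx0, hx1⟩ := hx i
    have hs := hσ i (x i) ⟨hx0, hx1⟩
    rw [hg, ← hb]
    have h1 : (σ i (x i)) ^ 2 ≤ M ^ 2 * (x i) ^ 2 := by
      nlinarith [abs_nonneg (σ i (x i)), sq_abs (σ i (x i)), mul_nonneg hM hx0.le]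
    have h2 : (x i * (1 - x i)) ^ 2 ≤ 1 / 16 := by
      nlinarith [sq_nonneg (x i - 1 / 2), mul_pos hx0 (by linarith : (0:ℝ) < 1 - x i)]
    calc (σ i (x i) * b i * (1 - x i)) ^ 2
        = (σ i (x i)) ^ 2 * (b i * (1 - x i)) ^ 2 := by ring
      _ ≤ M ^ 2 * (x i) ^ 2 * (b i * (1 - x i)) ^ 2 :=
          mul_le_mul_of_nonneg_right h1 (sq_nonneg _)
      _ = (x i * (1 - x i)) ^ 2 * (M ^ 2 * (b i) ^ 2) := by ring
      _ ≤ 1 / 16 * (M ^ 2 * (b i) ^ 2) :=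
          mul_le_mul_of_nonneg_right h2 (by positivity)
      _ = M ^ 2 / 16 * (b i) ^ 2 := by ring
  have hGB : G ≤ M ^ 2 / 16 * (lam1 ^ 2 * X2) := by
    calc G ≤ ∑ i, M ^ 2 / 16 * (b i) ^ 2 := Finset.sum_le_sum fun i _ => hgi i
      _ = M ^ 2 / 16 * ∑ i, (b i) ^ 2 := by rw [Finset.mul_sum]
      _ ≤ M ^ 2 / 16 * (lam1 ^ 2 * X2) := by
          exact mul_le_mul_of_nonneg_left hBB (by positivity)
  have hX2S2 : X2 ≤ S ^ 2 := by
    have h1 : ∀ i ∈ Finset.univ, (x i) ^ 2 ≤ x i * S := fun i _ => by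
      have hxS : x i ≤ S := Finset.single_le_sum (fun j _ => (hx j).1.le) (Finset.mem_univ i)
      nlinarith [(hx i).1]
    calc X2 ≤ ∑ i, x i * S := Finset.sum_le_sum h1
      _ = S ^ 2 := by rw [← Finset.sum_mul, ← hSdef, sq]
  have hG0 : 0 ≤ G := Finset.sum_nonneg fun i _ => sq_nonneg _
  have hGS : G ≤ M ^ 2 / 16 * lam1 ^ 2 * S ^ 2 := by
    refine hGB.trans ?_
    rw [mul_assoc]
    refine mul_le_mul_of_nonneg_left ?_ (by positivity)
    exact mul_le_mul_of_nonneg_left hX2S2 (by positivity)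
  -- combined bounds
  have hBd : (β * dmin - δ) * S ≤ β * B - δ * S := by
    nlinarith [mul_le_mul_of_nonneg_left hB hβ]
  have hQb : β * Q ≤ β * lam1 * S ^ 2 := by
    nlinarith [mul_le_mul_of_nonneg_left hQ hβ,
      mul_le_mul_of_nonneg_left hX2S2 (mul_nonneg hβ hlam0)]
  have hUp : (0:ℝ) ≤ U ^ 2 + U ^ 3 := by positivity
  have t1 : (β * dmin - δ) * (U + U ^ 2) ≤ (U ^ 2 + U ^ 3) * (β * B - δ * S) := by
    have h := mul_le_mul_of_nonneg_left hBd hUp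
    have e : (U ^ 2 + U ^ 3) * ((β * dmin - δ) * S) = (β * dmin - δ) * (U + U ^ 2) := by
      linear_combination ((β * dmin - δ) * (U + U ^ 2)) * hS1
    linarith
  have t2 : (U ^ 2 + U ^ 3) * (β * Q) ≤ β * lam1 * (1 + U) := by
    have h := mul_le_mul_of_nonneg_left hQb hUp
    have e : (U ^ 2 + U ^ 3) * (β * lam1 * S ^ 2) = β * lam1 * (1 + U) := by
      linear_combination (β * lam1 * (1 + U) * (U * S + 1)) * hS1
    linarith
  have t3 : U ^ 3 * G ≤ M ^ 2 / 16 * lam1 ^ 2 * U := by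
    have h := mul_le_mul_of_nonneg_left hGS (by positivity : (0:ℝ) ≤ U ^ 3)
    have e : U ^ 3 * (M ^ 2 / 16 * lam1 ^ 2 * S ^ 2) = M ^ 2 / 16 * lam1 ^ 2 * U := by
      linear_combination (M ^ 2 / 16 * lam1 ^ 2 * U * (U * S + 1)) * hS1
    linarith
  have t4 : (1 + θ) / 2 * (U ^ 4 * G) ≤ M ^ 2 / 32 * lam1 ^ 2 * (1 + θ) * U ^ 2 := by
    have h := mul_le_mul_of_nonneg_left hGS (by positivity : (0:ℝ) ≤ U ^ 4)
    have h2 := mul_le_mul_of_nonneg_left h (by linarith : (0:ℝ) ≤ (1 + θ) / 2)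
    have e : (1 + θ) / 2 * (U ^ 4 * (M ^ 2 / 16 * lam1 ^ 2 * S ^ 2))
        = M ^ 2 / 32 * lam1 ^ 2 * (1 + θ) * U ^ 2 := by
      linear_combination ((1 + θ) / 2 * (M ^ 2 / 16) * lam1 ^ 2 * U ^ 2 * (U * S + 1)) * hS1
    linarith
  -- key inequality
  have key : (1 + U) * (-(U ^ 2) * F + U ^ 3 * G) + (θ - 1) / 2 * (U ^ 4 * G)
      ≤ -(β * dmin - δ - M ^ 2 / 32 * lam1 ^ 2 * (1 + θ)) * U ^ 2
          - (β * dmin - β * lam1 - δ - M ^ 2 / 16 * lam1 ^ 2) * U + β * lam1 := by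
    have expand : (1 + U) * (-(U ^ 2) * F + U ^ 3 * G) + (θ - 1) / 2 * (U ^ 4 * G)
        = -((U ^ 2 + U ^ 3) * (β * B - δ * S)) + (U ^ 2 + U ^ 3) * (β * Q)
            + U ^ 3 * G + (1 + θ) / 2 * (U ^ 4 * G) := by
      rw [hFsum]; ring
    rw [expand]
    linarith [t1, t2, t3, t4]
  -- rpow manipulation and conclusion
  have h1U : (0:ℝ) < 1 + U := by linarith
  have hpow : (1 + U) ^ (θ - 1) = (1 + U) ^ (θ - 2) * (1 + U) := by
    rw [show θ - 1 = (θ - 2) + 1 by ring, Real.rpow_add h1U, Real.rpow_one]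
  have hE0 : (0:ℝ) < (1 + U) ^ (θ - 2) := Real.rpow_pos_of_pos h1U _
  calc θ * (1 + U) ^ (θ - 1) * (-(U ^ 2) * F + U ^ 3 * G)
        + (1 / 2) * θ * (θ - 1) * (1 + U) ^ (θ - 2) * U ^ 4 * G
      = θ * (1 + U) ^ (θ - 2) *
          ((1 + U) * (-(U ^ 2) * F + U ^ 3 * G) + (θ - 1) / 2 * (U ^ 4 * G)) := by
        rw [hpow]; ring
    _ ≤ θ * (1 + U) ^ (θ - 2) *
          (-(β * dmin - δ - M ^ 2 / 32 * lam1 ^ 2 * (1 + θ)) * U ^ 2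
            - (β * dmin - β * lam1 - δ - M ^ 2 / 16 * lam1 ^ 2) * U + β * lam1) :=
        mul_le_mul_of_nonneg_left key (by positivity)
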